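/- Let R = K[x_0,...,x_n] with n > r, let S = K[x_0,...,x_r] ⊆ R, let I be an ideal of R extended from an ideal of S (i.e., generated by polynomials involving only x_0,...,x_r), and let L = ⟨x_{r+1},...,x_l⟩ for any r+1 ≤ l ≤ n. Then I ∩ L = I · L. -/
import Mathlib


open MvPolynomial

/-- If `I ⊆ K[x_0,...,x_n]` is extended from `K[x_0,...,x_r]` (its generators only involve
the variables `x_0, ..., x_r`) and `L = ⟨x_{r+1}, ..., x_l⟩`, then `I ∩ L = I·L`. -/
theorem stmt4 {K : Type*} [Field K] {n r l : ℕ} (hrn : r < n) (hl1 : r + 1 ≤ l) (hln : l ≤ n)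
    (G : Set (MvPolynomial (Fin (n + 1)) K))
    (hG : ∀ g ∈ G, ∀ i ∈ MvPolynomial.vars g, (i : ℕ) ≤ r)
    (I : Ideal (MvPolynomial (Fin (n + 1)) K)) (hI : I = Ideal.span G)
    (L : Ideal (MvPolynomial (Fin (n + 1)) K))
    (hL : L = Ideal.span {p | ∃ i : Fin (n + 1), r + 1 ≤ (i : ℕ) ∧ (i : ℕ) ≤ l ∧ p = X i}) :
    I ⊓ L = I * L := by
  set F : Fin (n + 1) → MvPolynomial (Fin (n + 1)) K := fun i =>
    if r + 1 ≤ (i : ℕ) ∧ (i : ℕ) ≤ l then 0 else X i with hF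
  set π : MvPolynomial (Fin (n + 1)) K →ₐ[K] MvPolynomial (Fin (n + 1)) K := aeval F with hπ
  -- π fixes polynomials whose variables are ≤ r
  have hfix : ∀ g : MvPolynomial (Fin (n + 1)) K, (∀ i ∈ g.vars, (i : ℕ) ≤ r) → π g = g := by
    intro g hg
    have : π g = aeval X g := by
      apply eval₂Hom_congr' rfl _ rfl
      intro i hi _
      have hir := hg i hi
      simp only [Function.comp, hF]
      rw [if_neg (by omega)]
    rw [this, aeval_X_left_apply]
  -- π kills L
  have hkill : ∀ f ∈ L, π f = 0 := by
    intro f hf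
    rw [hL] at hf
    refine Submodule.span_induction ?_ ?_ ?_ ?_ hf
    · rintro p ⟨i, h1, h2, rfl⟩
      rw [hπ]; rw [aeval_X, hF]
      exact if_pos ⟨h1, h2⟩
    · simp
    · intro a b _ _ ha hb; simp [map_add, ha, hb]
    · intro a b _ hb
      rw [smul_eq_mul, map_mul, hb, mul_zero]
  -- p - π p ∈ L for all p
  have hsub : ∀ p : MvPolynomial (Fin (n + 1)) K, p - π p ∈ L := by
    intro p
    induction p using MvPolynomial.induction_on with
    | C a => rw [hπ, aeval_C, algebraMap_eq, sub_self]; exact L.zero_mem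
    | add p q hp hq =>
        have : p + q - π (p + q) = (p - π p) + (q - π q) := by rw [map_add]; ring
        rw [this]; exact L.add_mem hp hq
    | mul_X p i hp =>
        have : p * X i - π (p * X i) = (p - π p) * X i + π p * (X i - π (X i)) := by
          rw [map_mul]; ring
        rw [this]
        refine L.add_mem (L.mul_mem_right _ hp) (L.mul_mem_left _ ?_)
        by_cases hi : r + 1 ≤ (i : ℕ) ∧ (i : ℕ) ≤ l
        · have : π (X i) = 0 := by rw [hπ, aeval_X, hF]; exact if_pos hi
          rw [this, sub_zero, hL]
          exact Ideal.subset_span ⟨i, hi.1, hi.2, rfl⟩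
        · have : π (X i) = X i := by rw [hπ, aeval_X, hF]; exact if_neg hi
          rw [this, sub_self]; exact L.zero_mem
  -- π preserves I
  have hIstable : ∀ f ∈ I, π f ∈ I := by
    intro f hf
    rw [hI] at hf ⊢
    refine Submodule.span_induction ?_ ?_ ?_ ?_ hf
    · intro g hg
      rw [hfix g (hG g hg)]; exact Ideal.subset_span hg
    · simp
    · intro a b _ _ ha hb; rw [map_add]; exact Ideal.add_mem _ ha hb
    · intro a b _ hb
      rw [smul_eq_mul, map_mul]; exact Ideal.mul_mem_left _ _ hb
  -- f - π f ∈ I * L for f ∈ I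
  have hkey : ∀ f ∈ I, f - π f ∈ I * L := by
    intro f hf
    rw [hI] at hf
    refine Submodule.span_induction ?_ ?_ ?_ ?_ hf
    · intro g hg
      rw [hfix g (hG g hg), sub_self]; exact Ideal.zero_mem _
    · simp
    · intro a b _ _ ha hb
      have : a + b - π (a + b) = (a - π a) + (b - π b) := by rw [map_add]; ring
      rw [this]; exact Ideal.add_mem _ ha hb
    · intro a b hb hab
      have hbI : b ∈ I := by rw [hI]; exact hb
      have : a • b - π (a • b) = a * (b - π b) + (a - π a) * π b := by
        simp only [smul_eq_mul, map_mul]; ring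
      rw [this]
      refine Ideal.add_mem _ (Ideal.mul_mem_left _ _ hab) ?_
      rw [mul_comm (a - π a)]
      exact Ideal.mul_mem_mul (hIstable b hbI) (hsub a)
  apply le_antisymm
  · rintro f ⟨hfI, hfL⟩
    have := hkey f hfI
    rwa [hkill f hfL, sub_zero] at this
  · exact Ideal.mul_le_inf
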